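/- Let λ > 0, λ̇ ∈ ℝ, α > 0, N > 0, and set C = λ̇/(αλN), B = arctan(C). Then the function s(t) = α^{-1}(π/2 - arctan((λ + λ̇ t)/(αλN t))), extended by s(0) = 0, satisfies the initial value problem s(0) = 0 and s'(t) = cos^2(αs(t) + B) · sqrt(λ̇^2 + (αλN)^2)/(αλ cos B) for t > 0. -/

import Mathlib

open Real

/-- The reparameterization `s(t)` from unit-spherical-speed to constant-speed geodesics
solves the initial value problem
`s(0) = 0`, `s'(t) = cos²(α s(t) + B) · √(λ̇² + (αλN)²) / (αλ cos B)` for `t > 0`,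
where `B = arctan(λ̇ / (αλN))`. -/
theorem reparameterization_IVP (lam dlam α N : ℝ) (hlam : 0 < lam) (hα : 0 < α) (hN : 0 < N) :
    (fun t : ℝ => if t = 0 then 0
        else α⁻¹ * (π / 2 - Real.arctan ((lam + dlam * t) / (α * lam * N * t)))) 0 = 0 ∧
    ∀ t : ℝ, 0 < t →
      deriv (fun t : ℝ => if t = 0 then 0
          else α⁻¹ * (π / 2 - Real.arctan ((lam + dlam * t) / (α * lam * N * t)))) t =
        Real.cos (α * ((fun t : ℝ => if t = 0 then 0
            else α⁻¹ * (π / 2 - Real.arctan ((lam + dlam * t) / (α * lam * N * t)))) t)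
          + Real.arctan (dlam / (α * lam * N))) ^ 2
        * Real.sqrt (dlam ^ 2 + (α * lam * N) ^ 2)
        / (α * lam * Real.cos (Real.arctan (dlam / (α * lam * N)))) := by
  have ha : 0 < α * lam * N := by positivity
  set a : ℝ := α * lam * N with ha_def
  refine ⟨by simp, fun t ht => ?_⟩
  have ht0 : t ≠ 0 := ht.ne'
  have hat : a * t ≠ 0 := by positivity
  -- derivative of the smooth branch
  set g : ℝ → ℝ := fun t => α⁻¹ * (π / 2 - Real.arctan ((lam + dlam * t) / (a * t))) with hg
  set u : ℝ := (lam + dlam * t) / (a * t) with hu_def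
  have hnum : HasDerivAt (fun t : ℝ => lam + dlam * t) dlam t := by
    simpa using ((hasDerivAt_id t).const_mul dlam).const_add lam
  have hden : HasDerivAt (fun t : ℝ => a * t) a t := by
    simpa using (hasDerivAt_id t).const_mul a
  have hu : HasDerivAt (fun t : ℝ => (lam + dlam * t) / (a * t))
      ((dlam * (a * t) - (lam + dlam * t) * a) / (a * t) ^ 2) t := hnum.div hden hat
  have harc : HasDerivAt (fun t : ℝ => Real.arctan ((lam + dlam * t) / (a * t)))
      (1 / (1 + u ^ 2) * ((dlam * (a * t) - (lam + dlam * t) * a) / (a * t) ^ 2)) t :=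
    by simpa [Function.comp_def, one_div] using (Real.hasDerivAt_arctan u).comp t hu
  have hgder : HasDerivAt g
      (α⁻¹ * (0 - 1 / (1 + u ^ 2) * ((dlam * (a * t) - (lam + dlam * t) * a) / (a * t) ^ 2))) t :=
    ((hasDerivAt_const t (π / 2)).sub harc).const_mul α⁻¹
  have heq : (fun t : ℝ => if t = 0 then 0
      else α⁻¹ * (π / 2 - Real.arctan ((lam + dlam * t) / (a * t)))) =ᶠ[nhds t] g := by
    filter_upwards [eventually_ne_nhds ht0] with x hx
    simp [g, hx]
  rw [heq.deriv_eq, hgder.deriv]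
  simp only [if_neg ht0]
  -- now an algebraic identity
  set C : ℝ := dlam / a with hC
  have hαinv : α * (α⁻¹ * (π / 2 - Real.arctan u)) = π / 2 - Real.arctan u := by
    field_simp
  rw [hαinv]
  have hcos : Real.cos (π / 2 - Real.arctan u + Real.arctan C)
      = Real.sin (Real.arctan u - Real.arctan C) := by
    rw [← Real.cos_pi_div_two_sub]; ring_nf
  have h2 : π / 2 - Real.arctan u + Real.arctan C = π / 2 - (Real.arctan u - Real.arctan C) := by
    ring
  rw [h2, Real.cos_pi_div_two_sub, Real.sin_sub, Real.sin_arctan, Real.cos_arctan,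
    Real.sin_arctan, Real.cos_arctan]
  have hsqrt : Real.sqrt (dlam ^ 2 + a ^ 2) = a * Real.sqrt (1 + C ^ 2) := by
    rw [show dlam ^ 2 + a ^ 2 = a ^ 2 * (1 + C ^ 2) by
      rw [hC]; field_simp; ring]
    rw [Real.sqrt_mul (sq_nonneg a), Real.sqrt_sq ha.le]
  rw [hsqrt]
  have hsu : Real.sqrt (1 + u ^ 2) ^ 2 = 1 + u ^ 2 := Real.sq_sqrt (by positivity)
  have hsc : Real.sqrt (1 + C ^ 2) ^ 2 = 1 + C ^ 2 := Real.sq_sqrt (by positivity)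
  have hsu0 : Real.sqrt (1 + u ^ 2) ≠ 0 := by positivity
  have hsc0 : Real.sqrt (1 + C ^ 2) ≠ 0 := by positivity
  have huC : u - C = lam / (a * t) := by
    rw [hu_def, hC]; field_simp; ring
  have hnumer : dlam * (a * t) - (lam + dlam * t) * a = -(lam * a) := by ring
  rw [hnumer]
  set su : ℝ := Real.sqrt (1 + u ^ 2) with hsu_def
  set sc : ℝ := Real.sqrt (1 + C ^ 2) with hsc_def
  have huC' : (u - C) * (a * t) = lam := by
    rw [huC]; field_simp
  clear_value u C su sc
  clear_value a
  have hα0 : α ≠ 0 := hα.ne'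
  have hlam0 : lam ≠ 0 := hlam.ne'
  have ha0 : a ≠ 0 := ha.ne'
  field_simp
  linear_combination (lam^2) * hsu - (1+u^2)*(((u-C)*(a*t))+lam) * huC'
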